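/- The center of the algebra A_1 = ℂ⟨x,y⟩/(xy − yx − x) is exactly ℂ (the scalars). -/
import Mathlib

noncomputable section

/-- The free algebra `ℂ⟨x,y⟩` on two generators. -/
abbrev FreeTwo : Type := FreeAlgebra ℂ (Fin 2)

/-- The generator `x`. -/
def Xgen : FreeTwo := FreeAlgebra.ι ℂ 0

/-- The generator `y`. -/
def Ygen : FreeTwo := FreeAlgebra.ι ℂ 1

/-- The relation `x·(a·y) = (a·y)·x + x`, i.e. `x·a·y − a·y·x − x = 0`. -/
def relA (a : ℂ) : FreeTwo → FreeTwo → Prop := fun p q =>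
  p = Xgen * (a • Ygen) ∧ q = (a • Ygen) * Xgen + Xgen

/-- The algebra `A_a = ℂ⟨x,y⟩/(x·a·y − a·y·x − x)`. -/
abbrev Aalg (a : ℂ) : Type := RingQuot (relA a)

/-- The quotient map `ℂ⟨x,y⟩ → A_a`. -/
def mkA (a : ℂ) : FreeTwo →ₐ[ℂ] Aalg a := RingQuot.mkAlgHom ℂ (relA a)


/-- The algebra `A_1 = ℂ⟨x,y⟩/(xy − yx − x)`. -/
abbrev A1 : Type := Aalg 1

namespace A1Center

open Polynomial

/-! ### Generators of `A1` and the basic relation -/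

def XX : A1 := mkA 1 Xgen
def YY : A1 := mkA 1 Ygen

lemma rel1 : XX * YY = YY * XX + XX := by
  have h := RingQuot.mkAlgHom_rel ℂ (s := relA 1) (x := Xgen * ((1:ℂ) • Ygen))
    (y := ((1:ℂ) • Ygen) * Xgen + Xgen) ⟨rfl, rfl⟩
  simpa [mkA, XX, YY, one_smul, map_mul, map_add] using h

lemma Y_mul_Xpow (i : ℕ) : YY * XX ^ i = XX ^ i * YY - (i : ℂ) • XX ^ i := by
  induction i with
  | zero => simp
  | succ n ih =>
    have h : YY * XX = XX * YY - XX := eq_sub_iff_add_eq.mpr rel1.symm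
    rw [pow_succ, ← mul_assoc, ih, sub_mul, smul_mul_assoc, mul_assoc, h, mul_sub, ← mul_assoc]
    push_cast
    rw [add_smul, one_smul]
    abel

/-! ### The monomials `X^i Y^j` span `A1` -/

def vA : ℕ × ℕ → A1 := fun p => XX ^ p.1 * YY ^ p.2

def Sspan : Submodule ℂ A1 := Submodule.span ℂ (Set.range vA)

lemma mono_mem (i j : ℕ) : XX ^ i * YY ^ j ∈ Sspan :=
  Submodule.subset_span ⟨(i, j), rfl⟩

lemma X_mul_mem {s : A1} (hs : s ∈ Sspan) : XX * s ∈ Sspan := by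
  induction hs using Submodule.span_induction with
  | mem x hx =>
    obtain ⟨⟨i, j⟩, rfl⟩ := hx
    simpa [vA, ← mul_assoc, ← pow_succ'] using mono_mem (i+1) j
  | zero => simp
  | add x y _ _ hx hy => rw [mul_add]; exact Sspan.add_mem hx hy
  | smul c x _ hx => rw [mul_smul_comm]; exact Sspan.smul_mem c hx

lemma Y_mul_mem {s : A1} (hs : s ∈ Sspan) : YY * s ∈ Sspan := by
  induction hs using Submodule.span_induction with
  | mem x hx =>
    obtain ⟨⟨i, j⟩, rfl⟩ := hx
    have : YY * (XX ^ i * YY ^ j) = XX ^ i * YY ^ (j+1) - (i:ℂ) • (XX ^ i * YY ^ j) := by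
      rw [← mul_assoc, Y_mul_Xpow i, sub_mul, smul_mul_assoc, mul_assoc, ← pow_succ']
    rw [show vA (i, j) = XX ^ i * YY ^ j from rfl, this]
    exact Sspan.sub_mem (mono_mem i (j+1)) (Sspan.smul_mem _ (mono_mem i j))
  | zero => simp
  | add x y _ _ hx hy => rw [mul_add]; exact Sspan.add_mem hx hy
  | smul c x _ hx => rw [mul_smul_comm]; exact Sspan.smul_mem c hx

lemma span_top (z : A1) : z ∈ Sspan := by
  obtain ⟨u, rfl⟩ := RingQuot.mkAlgHom_surjective ℂ (relA 1) z
  have key : ∀ u : FreeTwo, ∀ s ∈ Sspan, (RingQuot.mkAlgHom ℂ (relA 1)) u * s ∈ Sspan := by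
    intro u
    induction u using FreeAlgebra.induction with
    | grade0 c =>
      intro s hs
      rw [AlgHom.commutes, ← Algebra.smul_def]
      exact Sspan.smul_mem c hs
    | grade1 i =>
      intro s hs
      fin_cases i
      · exact X_mul_mem hs
      · exact Y_mul_mem hs
    | add a b ha hb => intro s hs; rw [map_add, add_mul]; exact Sspan.add_mem (ha s hs) (hb s hs)
    | mul a b ha hb => intro s hs; rw [map_mul, mul_assoc]; exact ha _ (hb s hs)
  simpa using key u 1 (by simpa using mono_mem 0 0)

/-! ### The representation on `ℂ[X]`: `x ↦ (f ↦ X·f)`, `y ↦ (f ↦ −X·f′)` -/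

def Mt : Module.End ℂ ℂ[X] := LinearMap.mulLeft ℂ (X : ℂ[X])
def Nt : Module.End ℂ ℂ[X] := -(LinearMap.mulLeft ℂ (X : ℂ[X]) ∘ₗ (derivative : ℂ[X] →ₗ[ℂ] ℂ[X]))

lemma Mt_apply (f : ℂ[X]) : Mt f = X * f := rfl
lemma Nt_apply (f : ℂ[X]) : Nt f = -(X * derivative f) := rfl

lemma relMN : Mt * (1 • Nt) = (1 • Nt) * Mt + Mt := by
  refine LinearMap.ext fun f => ?_
  simp [Mt, Nt, Module.End.mul_apply, derivative_mul]
  ring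

def rhoFree : FreeTwo →ₐ[ℂ] Module.End ℂ ℂ[X] :=
  FreeAlgebra.lift ℂ (fun i => if i = 0 then Mt else Nt)

def rho : A1 →ₐ[ℂ] Module.End ℂ ℂ[X] :=
  RingQuot.liftAlgHom ℂ ⟨rhoFree, by
    rintro p q ⟨hp, hq⟩
    subst hp; subst hq
    simp only [map_mul, map_add, map_smul, rhoFree, FreeAlgebra.lift_ι_apply, Xgen, Ygen]
    norm_num
    simpa using relMN⟩

lemma rho_X : rho XX = Mt := by
  simp [rho, XX, mkA, RingQuot.liftAlgHom_mkAlgHom_apply, rhoFree, Xgen, FreeAlgebra.lift_ι_apply]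
lemma rho_Y : rho YY = Nt := by
  simp [rho, YY, mkA, RingQuot.liftAlgHom_mkAlgHom_apply, rhoFree, Ygen, FreeAlgebra.lift_ι_apply]

def vE : ℕ × ℕ → Module.End ℂ ℂ[X] := fun p => Mt ^ p.1 * Nt ^ p.2

lemma rho_vA (p : ℕ × ℕ) : rho (vA p) = vE p := by
  rw [vA, vE, map_mul, map_pow, map_pow, rho_X, rho_Y]

/-! ### Computation of the operators on monomials, and linear independence -/

lemma Nt_Xpow (n : ℕ) : Nt (X ^ n : ℂ[X]) = (-(n:ℂ)) • X ^ n := by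
  rw [Nt_apply, derivative_X_pow]
  cases n with
  | zero => simp
  | succ k =>
    simp only [smul_eq_C_mul, map_neg, map_natCast]
    push_cast
    ring

lemma Nt_pow_apply (j n : ℕ) : (Nt ^ j) (X ^ n : ℂ[X]) = (-(n:ℂ))^j • X ^ n := by
  induction j with
  | zero => simp
  | succ m ih =>
    rw [pow_succ, Module.End.mul_apply, Nt_Xpow, map_smul, ih, smul_smul, pow_succ, mul_comm]

lemma Mt_pow_apply (k m : ℕ) : (Mt ^ k) (X ^ m : ℂ[X]) = X ^ (m + k) := by
  induction k generalizing m with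
  | zero => simp
  | succ a ih =>
    rw [pow_succ, Module.End.mul_apply, Mt_apply, ← pow_succ']
    rw [ih (m+1)]
    congr 1
    ring

lemma T_linindep : LinearIndependent ℂ vE := by
  rw [linearIndependent_iff]
  intro l hl
  ext ⟨i, j⟩
  have key : ∀ n : ℕ, ∑ p ∈ l.support, (if p.1 = i then l p * (-(n:ℂ))^p.2 else 0) = 0 := by
    intro n
    have h1 : (l.sum fun p c => c • vE p) (X ^ n) = 0 := by
      rw [← Finsupp.linearCombination_apply] at *
      rw [hl]; rfl
    have h2 : ∑ p ∈ l.support, l p • ((-(n:ℂ))^p.2 • (X:ℂ[X]) ^ (n + p.1)) = 0 := by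
      rw [Finsupp.sum] at h1
      simpa [vE, Module.End.mul_apply, Nt_pow_apply, map_smul, Mt_pow_apply] using h1
    have h3 := congrArg (fun q : ℂ[X] => q.coeff (n + i)) h2
    simp only [finset_sum_coeff, coeff_smul, coeff_X_pow, smul_eq_mul, coeff_zero] at h3
    refine Eq.trans (Finset.sum_congr rfl fun p _ => ?_) h3
    by_cases hp : p.1 = i
    · rw [if_pos hp, if_pos (by omega : n + i = n + p.1)]
      ring
    · rw [if_neg hp, if_neg (by omega : ¬ n + i = n + p.1)]
      ring
  set Qi : ℂ[X] := ∑ p ∈ l.support, (if p.1 = i then C (l p) * X ^ p.2 else 0) with hQi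
  have hroot : ∀ n : ℕ, Qi.eval (-(n:ℂ)) = 0 := by
    intro n
    rw [hQi, eval_finset_sum]
    rw [← key n]
    apply Finset.sum_congr rfl
    intro p _
    by_cases hp : p.1 = i <;> simp [hp]
  have hQ0 : Qi = 0 := by
    apply Polynomial.eq_zero_of_infinite_isRoot
    apply Set.Infinite.mono (s := Set.range fun n : ℕ => -(n:ℂ))
    · rintro x ⟨n, rfl⟩; exact hroot n
    · apply Set.infinite_range_of_injective
      intro a b h
      simpa [neg_inj, Nat.cast_inj] using h
  have hco := congrArg (fun q : ℂ[X] => q.coeff j) hQ0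
  simp only [hQi, finset_sum_coeff, coeff_zero] at hco
  rw [Finsupp.coe_zero, Pi.zero_apply]
  rw [← hco]
  have hsummand : ∀ p ∈ l.support, (if p.1 = i then C (l p) * X ^ p.2 else 0 : ℂ[X]).coeff j
      = if p = (i, j) then l p else 0 := by
    intro p _
    by_cases hp : p.1 = i
    · rw [if_pos hp, coeff_C_mul, coeff_X_pow]
      by_cases hq : p.2 = j
      · simp [Prod.ext_iff, hp, hq]
      · have hq' : j ≠ p.2 := fun h => hq h.symm
        simp [Prod.ext_iff, hq, hq']
    · simp [hp, Prod.ext_iff]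
  rw [Finset.sum_congr rfl hsummand, Finset.sum_ite_eq' l.support (i,j) (fun p => l p)]
  by_cases hs : (i, j) ∈ l.support
  · simp [hs]
  · simp [hs, Finsupp.notMem_support_iff.mp hs]

/-! ### Operators commuting with `Mt` and `Nt` are scalar -/

lemma commutant_scalar (T : Module.End ℂ ℂ[X]) (hM : T * Mt = Mt * T) (hN : T * Nt = Nt * T) :
    ∃ c : ℂ, T = c • (1 : Module.End ℂ ℂ[X]) := by
  have hd : derivative (T 1) = 0 := by
    have h1 : T (Nt 1) = Nt (T 1) := congrArg (fun S : Module.End ℂ ℂ[X] => S 1) hN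
    have h2 : Nt (1 : ℂ[X]) = 0 := by simp [Nt_apply]
    rw [h2, map_zero] at h1
    have h3 : X * derivative (T 1) = 0 := neg_eq_zero.mp (by rw [← Nt_apply, ← h1])
    rcases mul_eq_zero.mp h3 with h | h
    · exact absurd h Polynomial.X_ne_zero
    · exact h
  set c : ℂ := (T 1).coeff 0 with hc
  have hpc : T 1 = C c :=
    Polynomial.eq_C_of_natDegree_eq_zero (Polynomial.natDegree_eq_zero_of_derivative_eq_zero hd)
  refine ⟨c, ?_⟩
  have hXn : ∀ n : ℕ, (X:ℂ[X]) ^ n = (Mt ^ n) 1 := by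
    intro n
    induction n with
    | zero => simp
    | succ k ih => rw [pow_succ', pow_succ', Module.End.mul_apply, ← ih, Mt_apply]
  have hpow : ∀ n : ℕ, ∀ f, T ((Mt ^ n) f) = (Mt ^ n) (T f) := by
    intro n
    induction n with
    | zero => simp
    | succ k ih =>
      intro f
      have hcomm : ∀ g, T (Mt g) = Mt (T g) := fun g => congrArg (fun S : Module.End ℂ ℂ[X] => S g) hM
      rw [pow_succ', Module.End.mul_apply, Module.End.mul_apply, hcomm, ih]
  have hMn : ∀ n : ℕ, T ((X:ℂ[X]) ^ n) = c • X ^ n := by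
    intro n
    rw [hXn n, hpow n 1, hpc]
    have : (C c : ℂ[X]) = c • 1 := by rw [smul_eq_C_mul, mul_one]
    rw [this, map_smul, ← hXn n]
  refine LinearMap.ext fun f => ?_
  induction f using Polynomial.induction_on' with
  | add a b ha hb => rw [map_add, ha, hb, map_add]
  | monomial n a =>
    have hm : (monomial n a : ℂ[X]) = a • X ^ n := by rw [smul_eq_C_mul, C_mul_X_pow_eq_monomial]
    rw [hm, map_smul, hMn n, LinearMap.smul_apply, Module.End.one_apply, smul_comm]

end A1Center

open A1Center Polynomial

/-- The center of `A_1 = ℂ⟨x,y⟩/(xy − yx − x)` is exactly the scalars `ℂ`. -/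
theorem A1_center_eq_scalars :
    ∀ z : A1, (∀ a : A1, z * a = a * z) ↔ ∃ c : ℂ, z = algebraMap ℂ A1 c := by
  intro z
  constructor
  · intro hz
    obtain ⟨l, hlz⟩ := Finsupp.mem_span_range_iff_exists_finsupp.mp (span_top z)
    have hMc : rho z * Mt = Mt * rho z := by
      rw [← rho_X, ← map_mul, ← map_mul, hz XX]
    have hNc : rho z * Nt = Nt * rho z := by
      rw [← rho_Y, ← map_mul, ← map_mul, hz YY]
    obtain ⟨c, hc⟩ := commutant_scalar (rho z) hMc hNc
    have him : Finsupp.linearCombination ℂ vE l = c • (1 : Module.End ℂ ℂ[X]) := by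
      rw [← hc, Finsupp.linearCombination_apply]
      have : rho z = rho (l.sum fun p a => a • vA p) := by rw [hlz]
      rw [this, map_finsuppSum]
      exact Finsupp.sum_congr fun p _ => by rw [map_smul, rho_vA]
    have hd0 : l - Finsupp.single ((0,0) : ℕ × ℕ) c = 0 := by
      have := linearIndependent_iff.mp T_linindep (l - Finsupp.single (0,0) c) ?_
      · exact this
      · rw [map_sub, him, Finsupp.linearCombination_single]
        rw [show vE (0,0) = 1 by simp [vE]]
        simp
    have hl : l = Finsupp.single ((0,0) : ℕ × ℕ) c := sub_eq_zero.mp hd0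
    refine ⟨c, ?_⟩
    rw [← hlz, hl, Finsupp.sum_single_index (by simp)]
    rw [show vA (0,0) = 1 by simp [vA], Algebra.algebraMap_eq_smul_one]
  · rintro ⟨c, rfl⟩ a
    exact Algebra.commutes c a
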